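/- For every totally positive 3×3 matrix A = (a_{i,j}), (1/2)·per(A)·a_{2,2} ≤ per(A_{{1,2},{1,2}})·per(A_{{2,3},{2,3}}) ≤ 2·per(A)·a_{2,2}. -/

import Mathlib

open Matrix BigOperators

/-- The permanent of a square real matrix. -/
def per {r : ℕ} (B : Matrix (Fin r) (Fin r) ℝ) : ℝ :=
  ∑ σ : Equiv.Perm (Fin r), ∏ i, B i (σ i)

/-- An `n × n` real matrix is totally positive if all its minors are positive. -/
def TotallyPos {n : ℕ} (A : Matrix (Fin n) (Fin n) ℝ) : Prop :=
  ∀ (k : ℕ) (f g : Fin k → Fin n), StrictMono f → StrictMono g →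
    0 < (A.submatrix f g).det

lemma per_succ {n : ℕ} (B : Matrix (Fin (n+1)) (Fin (n+1)) ℝ) :
    per B = ∑ j : Fin (n+1), B 0 j *
      per (Matrix.of fun i k : Fin n => B i.succ (Equiv.swap 0 j (k.succ))) := by
  rw [per, ← (Equiv.Perm.decomposeFin (n := n)).symm.sum_comp]
  rw [Fintype.sum_prod_type]
  refine Finset.sum_congr rfl fun j _ => ?_
  rw [per, Finset.mul_sum]
  refine Finset.sum_congr rfl fun σ _ => ?_
  rw [Fin.prod_univ_succ, Equiv.Perm.decomposeFin_symm_apply_zero]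
  congr 1
  refine Finset.prod_congr rfl fun i _ => ?_
  rw [Equiv.Perm.decomposeFin_symm_apply_succ]
  rfl

lemma per_one (B : Matrix (Fin 1) (Fin 1) ℝ) : per B = B 0 0 := by
  rw [per]
  rw [Finset.sum_eq_single 1 (fun σ _ _ => absurd (Subsingleton.elim σ 1) ‹_›) (by simp)]
  simp

lemma per_two (B : Matrix (Fin 2) (Fin 2) ℝ) :
    per B = B 0 0 * B 1 1 + B 0 1 * B 1 0 := by
  rw [per_succ]
  simp [per_one, Fin.sum_univ_succ, Equiv.swap_apply_def]

lemma per_three (B : Matrix (Fin 3) (Fin 3) ℝ) :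
    per B = B 0 0 * B 1 1 * B 2 2 + B 0 0 * B 1 2 * B 2 1
      + B 0 1 * B 1 0 * B 2 2 + B 0 1 * B 1 2 * B 2 0
      + B 0 2 * B 1 0 * B 2 1 + B 0 2 * B 1 1 * B 2 0 := by
  rw [per_succ]
  simp only [Fin.sum_univ_three, per_two, Matrix.of_apply]
  norm_num [Equiv.swap_apply_def, Fin.ext_iff]
  rw [Fin.sum_univ_three]
  norm_num
  ring

theorem stmt9 (A : Matrix (Fin 3) (Fin 3) ℝ) (hA : TotallyPos A) :
    (1 / 2 : ℝ) * (per A * A 1 1) ≤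
      per (A.submatrix ![0, 1] ![0, 1]) * per (A.submatrix ![1, 2] ![1, 2]) ∧
    per (A.submatrix ![0, 1] ![0, 1]) * per (A.submatrix ![1, 2] ![1, 2]) ≤
      2 * (per A * A 1 1) := by
  have sm1 : ∀ v : Fin 1 → Fin 3, StrictMono v := by
    intro v i j h
    fin_cases i <;> fin_cases j <;> simp at h
  have p : ∀ i j : Fin 3, 0 < A i j := by
    intro i j
    have := hA 1 ![i] ![j] (sm1 _) (sm1 _)
    rw [Matrix.det_fin_one] at this
    simpa using this
  have sm01 : StrictMono (![0, 1] : Fin 2 → Fin 3) := by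
    intro a b h; fin_cases a <;> fin_cases b <;> simp_all <;> decide
  have sm12 : StrictMono (![1, 2] : Fin 2 → Fin 3) := by
    intro a b h; fin_cases a <;> fin_cases b <;> simp_all <;> decide
  have m1 : 0 < A 0 0 * A 1 1 - A 0 1 * A 1 0 := by
    have h := hA 2 ![0, 1] ![0, 1] sm01 sm01
    rw [Matrix.det_fin_two] at h
    simpa using h
  have m2 : 0 < A 0 1 * A 1 2 - A 0 2 * A 1 1 := by
    have h := hA 2 ![0, 1] ![1, 2] sm01 sm12
    rw [Matrix.det_fin_two] at h
    simpa using h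
  have m3 : 0 < A 1 0 * A 2 1 - A 1 1 * A 2 0 := by
    have h := hA 2 ![1, 2] ![0, 1] sm12 sm01
    rw [Matrix.det_fin_two] at h
    simpa using h
  have m4 : 0 < A 1 1 * A 2 2 - A 1 2 * A 2 1 := by
    have h := hA 2 ![1, 2] ![1, 2] sm12 sm12
    rw [Matrix.det_fin_two] at h
    simpa using h
  rw [per_three, per_two, per_two]
  simp only [Matrix.submatrix_apply, Matrix.cons_val_zero, Matrix.cons_val_one, Matrix.head_cons]
  have h1 : A 0 1 * A 1 2 * (A 1 1 * A 2 0) < A 0 1 * A 1 2 * (A 1 0 * A 2 1) := by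
    have := mul_pos (mul_pos (p 0 1) (p 1 2)) m3; nlinarith
  have h2 : A 0 2 * A 1 1 * (A 1 0 * A 2 1) < A 0 1 * A 1 2 * (A 1 0 * A 2 1) := by
    have := mul_pos m2 (mul_pos (p 1 0) (p 2 1)); nlinarith
  have h3 : A 0 2 * A 1 1 * (A 1 1 * A 2 0) < A 0 1 * A 1 2 * (A 1 1 * A 2 0) := by
    have := mul_pos m2 (mul_pos (p 1 1) (p 2 0)); nlinarith
  have h4 : A 0 1 * A 1 0 * (A 1 2 * A 2 1) < A 0 0 * A 1 1 * (A 1 2 * A 2 1) := by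
    have := mul_pos m1 (mul_pos (p 1 2) (p 2 1)); nlinarith
  have hU : A 0 1 * A 1 0 * (A 1 2 * A 2 1) < A 0 1 * A 1 0 * (A 1 1 * A 2 2) := by
    have := mul_pos (mul_pos (p 0 1) (p 1 0)) m4; nlinarith
  constructor
  · nlinarith [h1, h2, h3, h4,
      mul_pos (mul_pos (p 0 0) (p 1 1)) (mul_pos (p 1 1) (p 2 2)),
      mul_pos (mul_pos (p 0 1) (p 1 0)) (mul_pos (p 1 1) (p 2 2))]
  · nlinarith [hU,
      mul_pos (mul_pos (p 0 0) (p 1 1)) (mul_pos (p 1 1) (p 2 2)),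
      mul_pos (mul_pos (p 0 0) (p 1 1)) (mul_pos (p 1 2) (p 2 1)),
      mul_pos (mul_pos (p 0 1) (p 1 0)) (mul_pos (p 1 1) (p 2 2)),
      mul_pos (mul_pos (p 0 1) (p 1 2)) (mul_pos (p 1 1) (p 2 0)),
      mul_pos (mul_pos (p 0 2) (p 1 0)) (mul_pos (p 1 1) (p 2 1)),
      mul_pos (mul_pos (p 0 2) (p 1 1)) (mul_pos (p 1 1) (p 2 0))]
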